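/- Let F : ℝ^p → ℝ be convex with F(0) = 0, let N : ℝ^p → ℝ be a seminorm, let A ⊆ ℝ^p be star-shaped about the origin (t·δ ∈ A whenever δ ∈ A and t ∈ [0,1]), and let r > 0. If F(δ) ≥ N(δ)²/3 for every δ ∈ A with N(δ) ≤ r, then F(δ) ≥ min{ N(δ)²/3, r·N(δ)/3 } for every δ ∈ A. -/
import Mathlib


/-- Convexity-based self-improvement argument (Step 1 of the proof of the Minoration
Lemma): if `F` is convex with `F 0 = 0`, `N` is a seminorm, `A` is star-shaped about the
origin and `F δ ≥ N δ ^ 2 / 3` for every `δ ∈ A` with `N δ ≤ r`, then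
`F δ ≥ min (N δ ^ 2 / 3) (r · N δ / 3)` for every `δ ∈ A`. -/
theorem quadratic_minorant_self_improvement {p : ℕ}
    (F : (Fin p → ℝ) → ℝ) (hFconv : ConvexOn ℝ Set.univ F) (hF0 : F 0 = 0)
    (N : Seminorm ℝ (Fin p → ℝ))
    (A : Set (Fin p → ℝ))
    (hA : ∀ δ ∈ A, ∀ t ∈ Set.Icc (0 : ℝ) 1, t • δ ∈ A)
    (r : ℝ) (hr : 0 < r)
    (hloc : ∀ δ ∈ A, N δ ≤ r → N δ ^ 2 / 3 ≤ F δ) :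
    ∀ δ ∈ A, min (N δ ^ 2 / 3) (r * N δ / 3) ≤ F δ := by
  intro δ hδ
  rcases le_or_gt (N δ) r with h | h
  · exact le_trans (min_le_left _ _) (hloc δ hδ h)
  · have hNpos : (0 : ℝ) < N δ := lt_trans hr h
    set t : ℝ := r / N δ with ht
    have ht0 : 0 < t := div_pos hr hNpos
    have ht1 : t ≤ 1 := by
      rw [ht, div_le_one hNpos]; exact h.le
    have hmem : t • δ ∈ A := hA δ hδ t ⟨ht0.le, ht1⟩
    have hNt : N (t • δ) = r := by
      rw [map_smul_eq_mul, Real.norm_eq_abs, abs_of_pos ht0, ht,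
        div_mul_cancel₀ _ hNpos.ne']
    have h1 : r ^ 2 / 3 ≤ F (t • δ) := by
      have := hloc (t • δ) hmem (le_of_eq hNt)
      rwa [hNt] at this
    have h2 : F (t • δ) ≤ t * F δ := by
      have := hFconv.2 (Set.mem_univ δ) (Set.mem_univ 0) ht0.le
        (sub_nonneg.mpr ht1) (by ring)
      simpa [hF0] using this
    have h3 : r ^ 2 / 3 ≤ t * F δ := le_trans h1 h2
    have h4 : r * N δ / 3 ≤ F δ := by
      rw [ht] at h3
      rw [div_mul_eq_mul_div, div_le_div_iff₀ (by norm_num) hNpos] at h3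
      nlinarith
    exact le_trans (min_le_right _ _) h4
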